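/- Let E_A be a primitive quantum channel on M_D(ℂ) with d linearly independent Kraus operators whose span S_1(A) contains an invertible matrix. Then i(A) ≤ D² − d + 1. -/

import Mathlib

open Matrix
open scoped ComplexOrder

variable {D : ℕ} {ι : Type*} [Fintype ι]

/-- The completely positive map with Kraus operators `A k`. -/
noncomputable def krausMap (A : ι → Matrix (Fin D) (Fin D) ℂ)
    (X : Matrix (Fin D) (Fin D) ℂ) : Matrix (Fin D) (Fin D) ℂ :=
  ∑ k, A k * X * (A k)ᴴ

/-- The product `A_{w 0} * A_{w 1} * ⋯ * A_{w (n-1)}` of Kraus operators along a word `w`. -/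
noncomputable def wordProd (A : ι → Matrix (Fin D) (Fin D) ℂ) {n : ℕ} (w : Fin n → ι) :
    Matrix (Fin D) (Fin D) ℂ :=
  (List.ofFn fun i => A (w i)).prod

/-- `S_n(A)`: the span of all products of exactly `n` Kraus operators. -/
noncomputable def krausSpan (A : ι → Matrix (Fin D) (Fin D) ℂ) (n : ℕ) :
    Submodule ℂ (Matrix (Fin D) (Fin D) ℂ) :=
  Submodule.span ℂ {M | ∃ w : Fin n → ι, M = wordProd A w}

/-- `H_n(A,φ) = S_n(A)|φ⟩`. -/
noncomputable def krausVecSpan (A : ι → Matrix (Fin D) (Fin D) ℂ) (n : ℕ)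
    (φ : Fin D → ℂ) : Submodule ℂ (Fin D → ℂ) :=
  Submodule.span ℂ {v | ∃ w : Fin n → ι, v = wordProd A w *ᵥ φ}

/-- A quantum channel is primitive if some power maps every pure state to a
positive definite (full-rank) operator. -/
def Primitive (A : ι → Matrix (Fin D) (Fin D) ℂ) : Prop :=
  ∃ n, ∀ φ : Fin D → ℂ, φ ≠ 0 →
    ((krausMap A)^[n] (vecMulVec φ (star φ))).PosDef

/-- `q(E_A)`: the quantum index of primitivity. -/
noncomputable def qIndex (A : ι → Matrix (Fin D) (Fin D) ℂ) : ℕ :=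
  sInf {n | ∀ φ : Fin D → ℂ, φ ≠ 0 →
    ((krausMap A)^[n] (vecMulVec φ (star φ))).PosDef}

/-- `i(A)`: the minimal `n` with `S_n(A) = M_D`. -/
noncomputable def iIndex (A : ι → Matrix (Fin D) (Fin D) ℂ) : ℕ :=
  sInf {n | krausSpan A n = ⊤}

/-- Trace preservation, `∑ k, A_k† A_k = 1`. -/
def TracePreserving (A : ι → Matrix (Fin D) (Fin D) ℂ) : Prop :=
  ∑ k, (A k)ᴴ * A k = 1

lemma wordProd_cons (A : ι → Matrix (Fin D) (Fin D) ℂ) {n : ℕ} (k : ι) (w : Fin n → ι) :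
    wordProd A (Fin.cons k w) = A k * wordProd A w := by
  simp [wordProd, List.ofFn_succ]

lemma wordProd_snoc (A : ι → Matrix (Fin D) (Fin D) ℂ) {n : ℕ} (w : Fin n → ι) (k : ι) :
    wordProd A (Fin.snoc w k) = wordProd A w * A k := by
  rw [wordProd, List.ofFn_succ']
  simp [wordProd]

lemma wordProd_one (A : ι → Matrix (Fin D) (Fin D) ℂ) (w : Fin 1 → ι) :
    wordProd A w = A (w 0) := by simp [wordProd]

lemma mulLeft_mem_succ {A : ι → Matrix (Fin D) (Fin D) ℂ} {m : ℕ} (k : ι)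
    {M : Matrix (Fin D) (Fin D) ℂ} (hM : M ∈ krausSpan A m) :
    A k * M ∈ krausSpan A (m + 1) := by
  have : (krausSpan A m).map (LinearMap.mulLeft ℂ (A k)) ≤ krausSpan A (m + 1) := by
    rw [krausSpan, Submodule.map_span, Submodule.span_le]
    rintro _ ⟨_, ⟨w, rfl⟩, rfl⟩
    exact Submodule.subset_span ⟨Fin.cons k w, by simp [wordProd_cons]⟩
  exact this (Submodule.mem_map_of_mem hM)

lemma mulRight_mem_succ {A : ι → Matrix (Fin D) (Fin D) ℂ} {m : ℕ} (k : ι)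
    {M : Matrix (Fin D) (Fin D) ℂ} (hM : M ∈ krausSpan A m) :
    M * A k ∈ krausSpan A (m + 1) := by
  have : (krausSpan A m).map (LinearMap.mulRight ℂ (A k)) ≤ krausSpan A (m + 1) := by
    rw [krausSpan, Submodule.map_span, Submodule.span_le]
    rintro _ ⟨_, ⟨w, rfl⟩, rfl⟩
    exact Submodule.subset_span ⟨Fin.snoc w k, by simp [wordProd_snoc]⟩
  exact this (Submodule.mem_map_of_mem hM)

lemma mul_mem_succ {A : ι → Matrix (Fin D) (Fin D) ℂ} {m : ℕ}
    {B M : Matrix (Fin D) (Fin D) ℂ}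
    (hB : B ∈ krausSpan A 1) (hM : M ∈ krausSpan A m) :
    B * M ∈ krausSpan A (m + 1) := by
  induction hB using Submodule.span_induction with
  | mem C hC =>
      obtain ⟨w, rfl⟩ := hC
      rw [wordProd_one]
      exact mulLeft_mem_succ (w 0) hM
  | zero => simpa using (krausSpan A (m+1)).zero_mem
  | add C C' _ _ h1 h2 => simpa [add_mul] using (krausSpan A (m+1)).add_mem h1 h2
  | smul c C _ h => simpa [smul_mul_assoc] using (krausSpan A (m+1)).smul_mem c h

lemma mapB_le {A : ι → Matrix (Fin D) (Fin D) ℂ} {B : Matrix (Fin D) (Fin D) ℂ}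
    (hB : B ∈ krausSpan A 1) (m : ℕ) :
    (krausSpan A m).map (LinearMap.mulLeft ℂ B) ≤ krausSpan A (m + 1) := by
  rintro _ ⟨M, hM, rfl⟩
  exact mul_mem_succ hB hM

lemma step_prop {A : ι → Matrix (Fin D) (Fin D) ℂ} {B : Matrix (Fin D) (Fin D) ℂ}
    (hB : B ∈ krausSpan A 1) {n : ℕ}
    (h : krausSpan A (n + 1) = (krausSpan A n).map (LinearMap.mulLeft ℂ B)) :
    krausSpan A (n + 2) = (krausSpan A (n + 1)).map (LinearMap.mulLeft ℂ B) := by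
  apply le_antisymm
  · rw [krausSpan, Submodule.span_le]
    rintro _ ⟨w, rfl⟩
    have h1 : wordProd A (Fin.init w) ∈ krausSpan A (n + 1) :=
      Submodule.subset_span ⟨_, rfl⟩
    rw [h] at h1
    obtain ⟨Q, hQ, hQeq⟩ := h1
    have hw : wordProd A w = B * (Q * A (w (Fin.last _))) := by
      conv_lhs => rw [← Fin.snoc_init_self w]
      rw [wordProd_snoc, ← hQeq]
      simp [LinearMap.mulLeft_apply, mul_assoc]
    rw [hw]
    exact Submodule.mem_map_of_mem (mulRight_mem_succ _ hQ)
  · exact mapB_le hB (n + 1)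

lemma prop_all {A : ι → Matrix (Fin D) (Fin D) ℂ} {B : Matrix (Fin D) (Fin D) ℂ}
    (hB : B ∈ krausSpan A 1) {n : ℕ}
    (h : krausSpan A (n + 1) = (krausSpan A n).map (LinearMap.mulLeft ℂ B)) :
    ∀ m, krausSpan A (n + m + 1) = (krausSpan A (n + m)).map (LinearMap.mulLeft ℂ B) := by
  intro m
  induction m with
  | zero => simpa using h
  | succ m ih =>
      have := step_prop hB ih
      rw [show n + (m + 1) + 1 = n + m + 2 by omega, show n + (m + 1) = n + m + 1 by omega]
      exact this

noncomputable def mulLeftEquiv {B : Matrix (Fin D) (Fin D) ℂ} (hB : IsUnit B) :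
    Matrix (Fin D) (Fin D) ℂ ≃ₗ[ℂ] Matrix (Fin D) (Fin D) ℂ :=
  LinearEquiv.ofLinear (LinearMap.mulLeft ℂ B) (LinearMap.mulLeft ℂ B⁻¹)
    (by
      ext M
      simp [LinearMap.mulLeft_apply, ← mul_assoc,
        Matrix.mul_nonsing_inv B ((Matrix.isUnit_iff_isUnit_det B).1 hB)])
    (by
      ext M
      simp [LinearMap.mulLeft_apply, ← mul_assoc,
        Matrix.nonsing_inv_mul B ((Matrix.isUnit_iff_isUnit_det B).1 hB)])

lemma finrank_map_mulLeft {B : Matrix (Fin D) (Fin D) ℂ} (hB : IsUnit B)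
    (p : Submodule ℂ (Matrix (Fin D) (Fin D) ℂ)) :
    Module.finrank ℂ (p.map (LinearMap.mulLeft ℂ B)) = Module.finrank ℂ p := by
  have : LinearMap.mulLeft ℂ B = (mulLeftEquiv hB : _ →ₗ[ℂ] _) := rfl
  rw [this]
  exact LinearEquiv.finrank_map_eq (mulLeftEquiv hB) p

lemma krausSpan_one (A : ι → Matrix (Fin D) (Fin D) ℂ) :
    krausSpan A 1 = Submodule.span ℂ (Set.range A) := by
  rw [krausSpan]
  congr 1
  ext M
  constructor
  · rintro ⟨w, rfl⟩; exact ⟨w 0, (wordProd_one A w).symm⟩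
  · rintro ⟨k, rfl⟩; exact ⟨fun _ => k, by rw [wordProd_one]⟩

theorem stmt17 (D d : ℕ) (A : Fin d → Matrix (Fin D) (Fin D) ℂ)
    (hTP : TracePreserving A) (hprim : Primitive A)
    (hli : LinearIndependent ℂ A)
    (hinv : ∃ B ∈ krausSpan A 1, IsUnit B) :
    iIndex A ≤ D ^ 2 - d + 1 := by
  obtain ⟨B, hB, hBu⟩ := hinv
  set S : Set ℕ := {n | krausSpan A n = ⊤} with hS
  rcases Set.eq_empty_or_nonempty S with hemp | hne
  · rw [iIndex, ← hS, hemp]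
    simp
  set N := sInf S with hN
  have hNmem : N ∈ S := Nat.sInf_mem hne
  have hNtop : krausSpan A N = ⊤ := hNmem
  rcases Nat.eq_zero_or_pos N with hN0 | hN1
  · rw [iIndex, ← hS, ← hN, hN0]; exact Nat.zero_le _
  have hD2 : Module.finrank ℂ (Matrix (Fin D) (Fin D) ℂ) = D ^ 2 := by
    rw [Module.finrank_matrix]
    simp [sq]
  have hlt : ∀ m, m < N → Module.finrank ℂ (krausSpan A m) < D ^ 2 := by
    intro m hm
    have hne' : krausSpan A m ≠ ⊤ := by
      intro h
      have : N ≤ m := Nat.sInf_le h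
      omega
    rw [← hD2]
    exact Submodule.finrank_lt hne'
  have hfr1 : Module.finrank ℂ (krausSpan A 1) = d := by
    rw [krausSpan_one]
    simpa using finrank_span_eq_card hli
  -- key strict increase
  have key : ∀ j, j + 1 < N →
      Module.finrank ℂ (krausSpan A (j + 1)) < Module.finrank ℂ (krausSpan A (j + 2)) := by
    intro j hj
    by_contra hcon
    push_neg at hcon
    have hmaple := mapB_le hB (j + 1)
    have hfr := finrank_map_mulLeft hBu (krausSpan A (j + 1))
    have heq : (krausSpan A (j + 1)).map (LinearMap.mulLeft ℂ B) = krausSpan A (j + 2) :=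
      Submodule.eq_of_le_of_finrank_le hmaple (by omega)
    have hall := prop_all hB heq.symm
    -- finranks constant from j+1 on
    have hconst : ∀ m, Module.finrank ℂ (krausSpan A (j + 1 + m)) =
        Module.finrank ℂ (krausSpan A (j + 1)) := by
      intro m
      induction m with
      | zero => rfl
      | succ m ih =>
          have := hall m
          have h2 : krausSpan A (j + 1 + (m + 1)) = (krausSpan A (j + 1 + m)).map
              (LinearMap.mulLeft ℂ B) := by
            convert this using 2 <;> omega
          rw [h2, finrank_map_mulLeft hBu, ih]
    have hNeq := hconst (N - (j + 1))
    rw [show j + 1 + (N - (j + 1)) = N by omega] at hNeq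
    have hNfr : Module.finrank ℂ (krausSpan A N) = D ^ 2 := by
      rw [hNtop, ← hD2]; exact finrank_top ℂ _
    have := hlt (j + 1) hj
    omega
  -- monotone count
  have count : ∀ j, j + 1 ≤ N → d + j ≤ Module.finrank ℂ (krausSpan A (j + 1)) := by
    intro j
    induction j with
    | zero => intro _; simp [hfr1]
    | succ j ih =>
        intro hj
        have h1 := ih (by omega)
        have h2 := key j (by omega)
        show d + (j + 1) ≤ Module.finrank ℂ (krausSpan A (j + 2))
        omega
  have hcount := count (N - 1) (by omega)
  rw [show N - 1 + 1 = N by omega] at hcount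
  have hle : Module.finrank ℂ (krausSpan A N) ≤ D ^ 2 := by
    rw [← hD2]; exact Submodule.finrank_le _
  rw [iIndex, ← hS, ← hN]
  omega
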